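/- Let P and Q be finite Boolean sums of stack-depth at most 1, and let (P,x) and (Q,y) be n-generated models over the same n variables based on P and Q respectively. If (P,x) and (Q,y) are 2-bisimilar, then they are isomorphic (as models, via a root-preserving, color-preserving order isomorphism). -/

import Mathlib

/-! # Common framework: superintuitionistic logics, Kripke frames and models -/

/-! ## Intuitionistic propositional formulas -/

inductive Form : Type
  | var : ℕ → Form
  | bot : Form
  | top : Form
  | and : Form → Form → Form
  | or  : Form → Form → Form
  | imp : Form → Form → Form
deriving DecidableEq

namespace Form

/-- Implication depth of a formula. -/
def depth : Form → ℕ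
  | var _ => 0
  | bot => 0
  | top => 0
  | and φ ψ => max φ.depth ψ.depth
  | or φ ψ => max φ.depth ψ.depth
  | imp φ ψ => max φ.depth ψ.depth + 1

/-- All propositional variables of the formula are among `p_0, …, p_{m-1}`. -/
def varsLt (m : ℕ) : Form → Prop
  | var p => p < m
  | bot => True
  | top => True
  | and φ ψ => φ.varsLt m ∧ ψ.varsLt m
  | or φ ψ => φ.varsLt m ∧ ψ.varsLt m
  | imp φ ψ => φ.varsLt m ∧ ψ.varsLt m

/-- Uniform substitution. -/
def subst (σ : ℕ → Form) : Form → Form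
  | var p => σ p
  | bot => bot
  | top => top
  | and φ ψ => and (φ.subst σ) (ψ.subst σ)
  | or φ ψ => or (φ.subst σ) (ψ.subst σ)
  | imp φ ψ => imp (φ.subst σ) (ψ.subst σ)

/-- Biconditional. -/
def iff (φ ψ : Form) : Form := and (imp φ ψ) (imp ψ φ)

/-- Negation. -/
def neg (φ : Form) : Form := imp φ bot

end Form

/-! ## IPC and superintuitionistic logics -/

/-- A Hilbert-style axiomatization of intuitionistic propositional logic. -/
inductive IPC : Form → Prop
  | ax1 (φ ψ : Form) : IPC (.imp φ (.imp ψ φ))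
  | ax2 (φ ψ χ : Form) :
      IPC (.imp (.imp φ (.imp ψ χ)) (.imp (.imp φ ψ) (.imp φ χ)))
  | andE1 (φ ψ : Form) : IPC (.imp (.and φ ψ) φ)
  | andE2 (φ ψ : Form) : IPC (.imp (.and φ ψ) ψ)
  | andI (φ ψ : Form) : IPC (.imp φ (.imp ψ (.and φ ψ)))
  | orI1 (φ ψ : Form) : IPC (.imp φ (.or φ ψ))
  | orI2 (φ ψ : Form) : IPC (.imp ψ (.or φ ψ))
  | orE (φ ψ χ : Form) :
      IPC (.imp (.imp φ χ) (.imp (.imp ψ χ) (.imp (.or φ ψ) χ)))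
  | botE (φ : Form) : IPC (.imp .bot φ)
  | topI : IPC .top
  | mp (φ ψ : Form) : IPC (.imp φ ψ) → IPC φ → IPC ψ

/-- The set of theorems of IPC. -/
def IPCSet : Set Form := {φ | IPC φ}

/-- A superintuitionistic logic: a set of formulas containing all theorems of
IPC, closed under modus ponens and uniform substitution. -/
def IsSILogic (L : Set Form) : Prop :=
  IPCSet ⊆ L ∧
  (∀ φ ψ : Form, Form.imp φ ψ ∈ L → φ ∈ L → ψ ∈ L) ∧
  (∀ (φ : Form) (σ : ℕ → Form), φ ∈ L → φ.subst σ ∈ L)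

/-- `oplus L Γ` is the least superintuitionistic logic containing `L` and `Γ`
(written `L ⊕ Γ`). -/
def oplus (L Γ : Set Form) : Set Form :=
  ⋂₀ {M : Set Form | IsSILogic M ∧ L ⊆ M ∧ Γ ⊆ M}

/-- A logic is `n`-uniform if every formula is provably equivalent in it to a
formula of implication depth at most `n`. -/
def Uniform (L : Set Form) (n : ℕ) : Prop :=
  ∀ φ : Form, ∃ ψ : Form, ψ.depth ≤ n ∧ Form.iff φ ψ ∈ L

/-- A logic is locally tabular if over each finite tuple of variables there are
only finitely many formulas up to provable equivalence. -/
def LocallyTabular (L : Set Form) : Prop :=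
  ∀ m : ℕ, ∃ Φ : Finset Form, ∀ φ : Form, φ.varsLt m → ∃ ψ ∈ Φ, Form.iff φ ψ ∈ L

/-! ## Kripke frames (posets) -/

structure Frame : Type 1 where
  W : Type
  le : W → W → Prop
  refl : ∀ x, le x x
  trans : ∀ x y z, le x y → le y z → le x z
  antisymm : ∀ x y, le x y → le y x → x = y

namespace Frame

def lt (F : Frame) (a b : F.W) : Prop := F.le a b ∧ a ≠ b

/-- A valuation is persistent if it is preserved upwards. -/
def Persistent (F : Frame) (V : ℕ → F.W → Prop) : Prop :=
  ∀ p a b, F.le a b → V p a → V p b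

/-- Kripke forcing. -/
def force (F : Frame) (V : ℕ → F.W → Prop) : Form → F.W → Prop
  | .var p, w => V p w
  | .bot, _ => False
  | .top, _ => True
  | .and φ ψ, w => F.force V φ w ∧ F.force V ψ w
  | .or φ ψ, w => F.force V φ w ∨ F.force V ψ w
  | .imp φ ψ, w => ∀ v, F.le w v → F.force V φ v → F.force V ψ v

/-- `F ⊩ φ`. -/
def Valid (F : Frame) (φ : Form) : Prop :=
  ∀ V : ℕ → F.W → Prop, F.Persistent V → ∀ w : F.W, F.force V φ w

def Rooted (F : Frame) : Prop := ∃ r, ∀ w, F.le r w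

/-- The subposet on a subset of the carrier. -/
def restrict (F : Frame) (s : Set F.W) : Frame where
  W := s
  le a b := F.le a.1 b.1
  refl a := F.refl a.1
  trans a b c h1 h2 := F.trans a.1 b.1 c.1 h1 h2
  antisymm a b h1 h2 := Subtype.ext (F.antisymm a.1 b.1 h1 h2)

/-- The rooted upset `↑z`. -/
def up (F : Frame) (z : F.W) : Frame := F.restrict {w | F.le z w}

/-- There is a chain of `d` elements in `↑w` starting at `w`. -/
def hasChainUp (F : Frame) (w : F.W) (d : ℕ) : Prop :=
  ∃ f : Fin d → F.W, (∀ i : Fin d, (i : ℕ) = 0 → f i = w) ∧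
    (∀ i j : Fin d, (i : ℕ) < (j : ℕ) → F.lt (f i) (f j))

/-- The depth of `w` is `d`: the longest chain in `↑w` has exactly `d` elements. -/
def depthEq (F : Frame) (w : F.W) (d : ℕ) : Prop :=
  F.hasChainUp w d ∧ ¬ F.hasChainUp w (d + 1)

/-- The covering relation of the poset. -/
def covBy (F : Frame) (a b : F.W) : Prop :=
  F.lt a b ∧ ∀ c, F.lt a c → F.lt c b → False

end Frame

/-- A p-morphism of posets. -/
def IsPMorphism (P Q : Frame) (f : P.W → Q.W) : Prop :=
  (∀ a b, P.le a b → Q.le (f a) (f b)) ∧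
  (∀ a b, Q.le (f a) b → ∃ a', P.le a a' ∧ f a' = b)

/-- `Q` is a p-morphic image of `P`. -/
def PMorphicImage (P Q : Frame) : Prop :=
  ∃ f : P.W → Q.W, IsPMorphism P Q f ∧ Function.Surjective f

/-- Order isomorphism of posets. -/
def FrameIso (P Q : Frame) : Prop :=
  ∃ f : P.W → Q.W, Function.Bijective f ∧ ∀ a b, P.le a b ↔ Q.le (f a) (f b)

/-- The logic of a class of posets. -/
def LogK (K : Set Frame) : Set Form := {φ | ∀ F ∈ K, F.Valid φ}

/-- The logic of a single poset. -/
def FrameLog (F : Frame) : Set Form := {φ | F.Valid φ}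

/-- `J` is a Yankov formula for the finite rooted poset `Q`: a finite poset
refutes `J` exactly when `Q` is isomorphic to a rooted upset of one of its
p-morphic images. -/
def IsYankov (J : Form) (Q : Frame) : Prop :=
  ∀ P : Frame, Finite P.W →
    (¬ P.Valid J ↔ ∃ G : Frame, PMorphicImage P G ∧ ∃ z : G.W, FrameIso (G.up z) Q)

/-! ## Rooted Kripke models over `n` propositional variables -/

structure Model (n : ℕ) : Type 1 where
  W : Type
  le : W → W → Prop
  refl : ∀ x, le x x
  trans : ∀ x y z, le x y → le y z → le x z
  antisymm : ∀ x y, le x y → le y x → x = y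
  root : W
  rooted : ∀ w, le root w
  col : W → Set (Fin n)
  mono : ∀ a b, le a b → col a ⊆ col b

namespace Model

/-- The underlying poset of a model. -/
def frame {n : ℕ} (M : Model n) : Frame :=
  ⟨M.W, M.le, M.refl, M.trans, M.antisymm⟩

def force {n : ℕ} (M : Model n) : Form → M.W → Prop
  | .var p, w => ∃ h : p < n, (⟨p, h⟩ : Fin n) ∈ M.col w
  | .bot, _ => False
  | .top, _ => True
  | .and φ ψ, w => M.force φ w ∧ M.force ψ w
  | .or φ ψ, w => M.force φ w ∨ M.force ψ w
  | .imp φ ψ, w => ∀ v, M.le w v → M.force φ v → M.force ψ v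

/-- Satisfaction at the root of the model. -/
def Sat {n : ℕ} (M : Model n) (φ : Form) : Prop := M.force φ M.root

/-- (Full) bisimilarity of two rooted models. -/
def Bisim {n : ℕ} (M N : Model n) : Prop :=
  ∃ S : M.W → N.W → Prop,
    S M.root N.root ∧
    (∀ a b, S a b → M.col a = N.col b) ∧
    (∀ a b a', S a b → M.le a a' → ∃ b', N.le b b' ∧ S a' b') ∧
    (∀ a b b', S a b → N.le b b' → ∃ a', M.le a a' ∧ S a' b')

/-- `k`-bisimilarity of the points `x, y`, via a decreasing chain
`S k ⊆ ⋯ ⊆ S 0` of relations. -/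
def NBisimAt {n : ℕ} (M N : Model n) (k : ℕ) (x : M.W) (y : N.W) : Prop :=
  ∃ S : ℕ → M.W → N.W → Prop,
    (∀ j a b, S (j + 1) a b → S j a b) ∧
    S k x y ∧
    (∀ a b, S 0 a b → M.col a = N.col b) ∧
    (∀ j a b a', j < k → S (j + 1) a b → M.le a a' →
        ∃ b', N.le b b' ∧ S j a' b') ∧
    (∀ j a b b', j < k → S (j + 1) a b → N.le b b' →
        ∃ a', M.le a a' ∧ S j a' b')

/-- `k`-bisimilarity of two rooted models. -/
def NBisim {n : ℕ} (M N : Model n) (k : ℕ) : Prop :=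
  NBisimAt M N k M.root N.root

/-- The submodel on the rooted upset `↑z`. -/
def up {n : ℕ} (M : Model n) (z : M.W) : Model n where
  W := {w : M.W // M.le z w}
  le a b := M.le a.1 b.1
  refl a := M.refl a.1
  trans a b c h1 h2 := M.trans a.1 b.1 c.1 h1 h2
  antisymm a b h1 h2 := Subtype.ext (M.antisymm a.1 b.1 h1 h2)
  root := ⟨z, M.refl z⟩
  rooted w := w.2
  col a := M.col a.1
  mono a b h := M.mono a.1 b.1 h

/-- `(M, x) ≤ₖ (N, y)`: there is `z ≥ x` such that `(↑z, z)` is `k`-bisimilar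
with `(N, y)`. -/
def LeBisim {n : ℕ} (M N : Model n) (k : ℕ) : Prop :=
  ∃ z : M.W, M.le M.root z ∧ NBisim (M.up z) N k

/-- Two points of a model are bisimilar. -/
def PointsBisim {n : ℕ} (M : Model n) (a b : M.W) : Prop :=
  ∃ S : M.W → M.W → Prop,
    S a b ∧
    (∀ x y, S x y → M.col x = M.col y) ∧
    (∀ x y x', S x y → M.le x x' → ∃ y', M.le y y' ∧ S x' y') ∧
    (∀ x y y', S x y → M.le y y' → ∃ x', M.le x x' ∧ S x' y')

/-- A model over `n` variables is (`n`-)generated if it contains no two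
distinct bisimilar points. -/
def Generated {n : ℕ} (M : Model n) : Prop :=
  ∀ a b : M.W, M.PointsBisim a b → a = b

/-- Isomorphism of models: a root-preserving, color-preserving order
isomorphism. -/
def Iso {n : ℕ} (M N : Model n) : Prop :=
  ∃ f : M.W → N.W, Function.Bijective f ∧ f M.root = N.root ∧
    (∀ a b, M.le a b ↔ N.le (f a) (f b)) ∧ (∀ a, N.col (f a) = M.col a)

/-- `M` is a model over the class of posets `K`: its underlying poset is a
p-morphic image of a rooted upset of a member of `K`. -/
def InClass {n : ℕ} (K : Set Frame) (M : Model n) : Prop :=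
  ∃ F ∈ K, ∃ z : F.W, PMorphicImage (F.up z) M.frame

/-- The model on the rooted upset `↑z` of a frame `F`, with coloring `c`. -/
def ofFrame (F : Frame) (z : F.W) (n : ℕ) (c : (F.up z).W → Set (Fin n))
    (hc : ∀ a b : (F.up z).W, (F.up z).le a b → c a ⊆ c b) : Model n where
  W := (F.up z).W
  le := (F.up z).le
  refl := (F.up z).refl
  trans := (F.up z).trans
  antisymm := (F.up z).antisymm
  root := ⟨z, F.refl z⟩
  rooted w := w.2
  col := c
  mono := hc

end Model

/-! ## Boolean sums and stacks -/

/-- A (finite rooted) poset is a Boolean sum: it is rooted, covers decrease the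
depth by exactly one, and every point of depth `k+1` lies below every point of
depth `k`. -/
def IsBooleanSum (F : Frame) : Prop :=
  F.Rooted ∧
  (∀ a b da db, F.covBy a b → F.depthEq a da → F.depthEq b db → da = db + 1) ∧
  (∀ a b k, F.depthEq a (k + 1) → F.depthEq b k → F.le a b)

/-- `F` contains a `k`-stack: `k` consecutive layers (sets of points of equal
depth) each containing at least two points. -/
def HasStack (F : Frame) (k : ℕ) : Prop :=
  ∃ j : ℕ, ∀ i : ℕ, j ≤ i → i < j + k →
    ∃ a b : F.W, a ≠ b ∧ F.depthEq a i ∧ F.depthEq b i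

/-! ## The posets Q₁, …, Q₈ -/

def q1le : Fin 4 → Fin 4 → Bool := fun a b =>
  a = b || a = 0 || (a = 1 && b = 3)
def q2le : Fin 5 → Fin 5 → Bool := fun a b =>
  a = b || a = 0 || (a = 1 && (b = 3 || b = 4)) || (a = 2 && b = 4)
def q3le : Fin 5 → Fin 5 → Bool := fun a b =>
  a = b || a = 0 || (a = 1 && b = 4) || (a = 2 && (b = 3 || b = 4)) ||
    (a = 3 && b = 4)
def q4le : Fin 5 → Fin 5 → Bool := fun a b =>
  a = b || a = 0 || ((a = 1 || a = 2) && (b = 3 || b = 4))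
def q5le : Fin 6 → Fin 6 → Bool := fun a b =>
  a = b || a = 0 || b = 5 || ((a = 1 || a = 2) && (b = 3 || b = 4))
def q6le : Fin 4 → Fin 4 → Bool := fun a b =>
  a = b || a = 0 || b = 3
def q7le : Fin 5 → Fin 5 → Bool := fun a b =>
  a = b || a = 0 || (a = 1 && b = 3) || (a = 2 && b = 4)
def q8le : Fin 4 → Fin 4 → Bool := fun a b =>
  a = b || a = 0

/-- `Q₁`: root `0`; immediate successors `1`, `2`; `2` maximal; `3` the unique
(maximal) immediate successor of `1`. -/
def Q1f : Frame :=
  ⟨Fin 4, fun a b => q1le a b = true, by decide, by decide, by decide⟩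
/-- `Q₂`: root `0`; immediate successors `1`, `2`; maximal points `3`, `4`;
`1 < 3`, `1 < 4`, `2 < 4`, `2 ≮ 3`. -/
def Q2f : Frame :=
  ⟨Fin 5, fun a b => q2le a b = true, by decide, by decide, by decide⟩
/-- `Q₃`: root `0`; immediate successors `1`, `2`; `3` covers `2`; top `4`
with `1 < 4` and `3 < 4`. -/
def Q3f : Frame :=
  ⟨Fin 5, fun a b => q3le a b = true, by decide, by decide, by decide⟩
/-- `Q₄`: root `0`; `1`, `2` cover the root; maximal `3`, `4` above both `1`
and `2`. -/
def Q4f : Frame :=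
  ⟨Fin 5, fun a b => q4le a b = true, by decide, by decide, by decide⟩
/-- `Q₅`: `Q₄` with a greatest element `5` added on top. -/
def Q5f : Frame :=
  ⟨Fin 6, fun a b => q5le a b = true, by decide, by decide, by decide⟩
/-- `Q₆`: the diamond. -/
def Q6f : Frame :=
  ⟨Fin 4, fun a b => q6le a b = true, by decide, by decide, by decide⟩
/-- `Q₇`: root `0`; `1 < 3`, `2 < 4`, and no other strict relations above the
root. -/
def Q7f : Frame :=
  ⟨Fin 5, fun a b => q7le a b = true, by decide, by decide, by decide⟩
/-- `Q₈`: a root with three pairwise incomparable maximal points. -/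
def Q8f : Frame :=
  ⟨Fin 4, fun a b => q8le a b = true, by decide, by decide, by decide⟩

/-! ## Particular logics -/

/-- The one-element poset. -/
def unitFrame : Frame :=
  ⟨PUnit, fun _ _ => True, fun _ => trivial, fun _ _ _ _ _ => trivial,
    fun a b _ _ => Subsingleton.elim a b⟩

/-- The two-element chain. -/
def chain2 : Frame :=
  ⟨Bool, fun a b => a ≤ b, le_refl, fun _ _ _ => le_trans,
    fun _ _ => le_antisymm⟩

/-- Classical propositional logic: the logic of the one-element poset. -/
def CPC : Set Form := FrameLog unitFrame

/-- The logic of the two-element chain. -/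
def Sme : Set Form := FrameLog chain2

/-- The weak Peirce law `(q → p) ∨ (((p → q) → p) → p)`. -/
def wPLax : Form :=
  .or (.imp (.var 1) (.var 0))
    (.imp (.imp (.imp (.var 0) (.var 1)) (.var 0)) (.var 0))

/-- The logic `wPL = IPC ⊕ (q → p) ∨ (((p → q) → p) → p)`. -/
def wPL : Set Form := oplus IPCSet {wPLax}

/-- The bounded-width-2 axiom `⋁_{i≤2} (pᵢ → ⋁_{j≠i} pⱼ)`. -/
def bw2ax : Form :=
  .or (.imp (.var 0) (.or (.var 1) (.var 2)))
    (.or (.imp (.var 1) (.or (.var 0) (.var 2)))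
      (.imp (.var 2) (.or (.var 0) (.var 1))))

/-- The axiom `¬p ∨ ¬¬p`. -/
def kcax : Form := .or (Form.neg (.var 0)) (Form.neg (Form.neg (.var 0)))

/-- The logic `Box = wPL ⊕ bw₂ ⊕ (¬p ∨ ¬¬p)`. -/
def BoxLogic : Set Form := oplus wPL {bw2ax, kcax}

/-- The bounded-depth formulas. -/
def bd : ℕ → Form
  | 0 => .var 0
  | n + 1 => .or (.var (n + 1)) (.imp (.var (n + 1)) (bd n))

/-- The logic `BD_n = IPC ⊕ bd_n`. -/
def BD (n : ℕ) : Set Form := oplus IPCSet {bd n}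

/-- A logic is of finite depth if it contains some `BD_n`. -/
def FiniteDepth (L : Set Form) : Prop := ∃ n, BD n ⊆ L

/-! ## The Rieger–Nishimura ladder -/

/-- Points of the Rieger–Nishimura ladder: `inl k = L_k`, `inr k = R_k`. -/
abbrev RNpt : Type := ℕ ⊕ ℕ

/-- The covering relation of the Rieger–Nishimura ladder (`rnCov a b` means
`a ⋖ b`, i.e. `b` is an immediate successor of `a`). -/
inductive rnCov : RNpt → RNpt → Prop
  | ll (k : ℕ) : rnCov (.inl (k + 1)) (.inl k)
  | rr (k : ℕ) : rnCov (.inr (k + 1)) (.inr k)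
  | rl (k : ℕ) : rnCov (.inr (k + 1)) (.inl k)
  | lr (k : ℕ) : rnCov (.inl (k + 2)) (.inr k)

private def rnIdx : RNpt → ℕ
  | .inl k => 2 * k
  | .inr k => 2 * k + 1

private theorem rnCov_idx {a b : RNpt} (h : rnCov a b) : rnIdx b < rnIdx a := by
  cases h <;> simp [rnIdx] <;> omega

private theorem rnLe_idx {a b : RNpt} (h : Relation.ReflTransGen rnCov a b) :
    rnIdx b ≤ rnIdx a := by
  induction h with
  | refl => exact le_rfl
  | tail _ h₂ ih => exact le_trans (le_of_lt (rnCov_idx h₂)) ih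

private theorem rnIdx_inj {a b : RNpt} (h : rnIdx a = rnIdx b) : a = b := by
  rcases a with a | a <;> rcases b with b | b <;> simp [rnIdx] at h ⊢ <;> omega

/-- The Rieger–Nishimura ladder as a poset: the order is the reflexive
transitive closure of the covering relation. -/
def RN : Frame where
  W := RNpt
  le a b := Relation.ReflTransGen rnCov a b
  refl _ := Relation.ReflTransGen.refl
  trans _ _ _ h1 h2 := h1.trans h2
  antisymm _ _ h1 h2 := rnIdx_inj (le_antisymm (rnLe_idx h2) (rnLe_idx h1))

/-! ## Combs -/

def combLe (n : ℕ) : (Fin n ⊕ Fin n) → (Fin n ⊕ Fin n) → Prop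
  | .inl i, .inl j => i ≤ j
  | .inl i, .inr j => i ≤ j
  | .inr i, .inr j => i = j
  | .inr _, .inl _ => False

/-- The `n`-comb: base points `x_1 ≤ … ≤ x_n` (encoded `inl 0, …, inl (n-1)`)
and maximal teeth `y_1, …, y_n` (encoded `inr 0, …, inr (n-1)`), with
`x_i ≤ y_j ↔ i ≤ j` and the teeth pairwise incomparable. -/
def Comb (n : ℕ) : Frame where
  W := Fin n ⊕ Fin n
  le := combLe n
  refl := by rintro (i | i) <;> simp [combLe]
  trans := by
    rintro (i | i) (j | j) (k | k) h1 h2 <;> simp only [combLe] at * <;>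
      first
        | exact le_trans h1 h2
        | exact h2 ▸ h1
  antisymm := by
    rintro (i | i) (j | j) h1 h2 <;> simp only [combLe] at * <;>
      first
        | exact congrArg Sum.inl (le_antisymm h1 h2)
        | exact congrArg Sum.inr h1

/-- A broken `m`-comb: (isomorphic to) a subposet of the `m`-comb containing
all of the base points `x_1, …, x_m`. -/
def IsBrokenComb (F : Frame) (m : ℕ) : Prop :=
  ∃ s : Set (Comb m).W, (∀ i : Fin m, Sum.inl i ∈ s) ∧
    FrameIso F ((Comb m).restrict s)

/-- The logic of the class of all combs. -/
def LFC : Set Form := LogK {F | ∃ n, F = Comb n}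

/-! ## The stacked models `M_n^k` and `N_n^k` -/

/-- Height index of a point: layer `j` (from the top) has index `j`, the root
(`none`) has index `k+1`. -/
def stackIdx (k : ℕ) : Option (Fin (k + 1) × Bool) → ℕ
  | none => k + 1
  | some (j, _) => j

/-- Size of the color (an initial segment of the variables): the left point
(`false`) of layer `j` gets `1^{n-j}0^j`, the right point (`true`) gets
`1^{n-j-1}0^{j+1}`, and the root gets `1^r0^{n-r}`. -/
def stackColSize (n k r : ℕ) : Option (Fin (k + 1) × Bool) → ℕ
  | none => r
  | some (j, false) => n - j
  | some (j, true) => n - ((j : ℕ) + 1)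

private theorem stackColSize_le (n k r : ℕ) (hr : r ≤ n - (k + 1))
    {a b : Option (Fin (k + 1) × Bool)} (h : stackIdx k b < stackIdx k a) :
    stackColSize n k r a ≤ stackColSize n k r b := by
  rcases a with _ | ⟨j, _ | _⟩ <;> rcases b with _ | ⟨j', _ | _⟩ <;>
    simp only [stackIdx, stackColSize] at * <;> omega

/-- The common shape of `M_n^k` and `N_n^k`, with root color `1^r0^{n-r}`:
`k+1` layers of two points stacked on top of a root. -/
def stackModel (n k r : ℕ) (hr : r ≤ n - (k + 1)) : Model n where
  W := Option (Fin (k + 1) × Bool)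
  le a b := a = b ∨ stackIdx k b < stackIdx k a
  refl _ := Or.inl rfl
  trans := by
    rintro a b c (rfl | h1) h2
    · exact h2
    · rcases h2 with rfl | h2
      · exact Or.inr h1
      · exact Or.inr (h2.trans h1)
  antisymm := by
    rintro a b (rfl | h1) h2
    · rfl
    · rcases h2 with rfl | h2
      · rfl
      · omega
  root := none
  rooted := by
    rintro (_ | ⟨j, s⟩)
    · exact Or.inl rfl
    · exact Or.inr j.isLt
  col a := {i : Fin n | (i : ℕ) < stackColSize n k r a}
  mono := by
    rintro a b (rfl | h) i hi
    · exact hi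
    · exact lt_of_lt_of_le hi (stackColSize_le n k r hr h)

/-- The model `M_n^k` (root color `1^{n-k-1}0^{k+1}`). -/
def Mmodel (n k : ℕ) : Model n := stackModel n k (n - (k + 1)) le_rfl

/-- The model `N_n^k` (root color `1^{n-k-2}0^{k+2}`). -/
def Nmodel (n k : ℕ) : Model n := stackModel n k (n - (k + 2)) (by omega)

/-! ## The frames `S_n` -/

/-- Height index in `S_n`: the top point (`some none`) has index `0`, the two
points of the `j`-th middle layer have index `j+1`, and the root (`none`) has
index `n`. -/
def sIdx (n : ℕ) : Option (Option (Fin (n - 1) × Bool)) → ℕ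
  | none => n
  | some none => 0
  | some (some (j, _)) => (j : ℕ) + 1

/-- The frame `S_n` (for `n ≥ 2`): the Boolean sum whose layers from top to
bottom have sizes `1, 2, …, 2, 1` (with `n - 1` layers of size `2`). -/
def SFrame (n : ℕ) : Frame where
  W := Option (Option (Fin (n - 1) × Bool))
  le a b := a = b ∨ sIdx n b < sIdx n a
  refl _ := Or.inl rfl
  trans := by
    rintro a b c (rfl | h1) h2
    · exact h2
    · rcases h2 with rfl | h2
      · exact Or.inr h1
      · exact Or.inr (h2.trans h1)
  antisymm := by
    rintro a b (rfl | h1) h2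
    · rfl
    · rcases h2 with rfl | h2
      · rfl
      · omega


/-! ## Auxiliary development for Statement 8 -/

namespace S8aux

variable {n : ℕ}

theorem chain_one (M : Model n) (w : M.W) : M.frame.hasChainUp w 1 := by
  refine ⟨fun _ => w, fun _ _ => rfl, ?_⟩
  intro i j hij
  have hi := i.isLt
  have hj := j.isLt
  omega

theorem chain_mono (M : Model n) (w : M.W) {d d' : ℕ} (h : d' ≤ d)
    (hc : M.frame.hasChainUp w d) : M.frame.hasChainUp w d' := by
  obtain ⟨f, h0, hs⟩ := hc
  exact ⟨fun i => f ⟨i, lt_of_lt_of_le i.2 h⟩, fun i hi => h0 _ hi,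
    fun i j hij => hs _ _ hij⟩

theorem chain_card (M : Model n) [Finite M.W] (w : M.W) {d : ℕ}
    (hc : M.frame.hasChainUp w d) : d ≤ Nat.card M.W := by
  obtain ⟨f, h0, hs⟩ := hc
  have hinj : Function.Injective f := by
    intro i j hij
    rcases lt_trichotomy (i : ℕ) (j : ℕ) with h | h | h
    · exact absurd hij (hs i j h).2
    · exact Fin.ext h
    · exact absurd hij.symm (hs j i h).2
  calc d = Nat.card (Fin d) := by simp
    _ ≤ Nat.card M.W := Nat.card_le_card_of_injective f hinj

open Classical in
noncomputable def dep (M : Model n) [Finite M.W] (w : M.W) : ℕ :=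
  Nat.findGreatest (M.frame.hasChainUp w) (Nat.card M.W)

theorem depthEq_dep (M : Model n) [Finite M.W] (w : M.W) :
    M.frame.depthEq w (dep M w) := by
  classical
  have hne : Nonempty M.W := ⟨w⟩
  have hcard : 0 < Nat.card M.W := Nat.card_pos
  unfold dep
  constructor
  · exact Nat.findGreatest_spec hcard (chain_one M w)
  · intro hc
    have hle := chain_card M w hc
    exact Nat.findGreatest_is_greatest (Nat.lt_succ_self _) hle hc

theorem one_le_dep (M : Model n) [Finite M.W] (w : M.W) : 1 ≤ dep M w := by
  by_contra h
  have h2 := (depthEq_dep M w).2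
  rw [show dep M w = 0 by omega] at h2
  exact h2 (chain_one M w)

theorem chain_prepend (M : Model n) {a w : M.W} (hle : M.le a w) (hne : a ≠ w)
    {d : ℕ} (hc : M.frame.hasChainUp w d) : M.frame.hasChainUp a (d + 1) := by
  obtain ⟨f, h0, hs⟩ := hc
  have hle0 : ∀ k : Fin d, M.le w (f k) := by
    intro k
    have hd : 0 < d := k.2.trans_le (le_of_eq rfl) |> fun h => Nat.pos_of_ne_zero (by omega)
    by_cases hk : (k : ℕ) = 0
    · rw [h0 k hk]; exact M.refl w
    · have h00 : f ⟨0, hd⟩ = w := h0 _ rfl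
      have := hs ⟨0, hd⟩ k (Nat.pos_of_ne_zero hk)
      rw [h00] at this
      exact this.1
  refine ⟨fun i => if h : (i : ℕ) = 0 then a else f ⟨(i : ℕ) - 1, by omega⟩, ?_, ?_⟩
  · intro i hi; exact dif_pos hi
  · intro i j hij
    have hj : (j : ℕ) ≠ 0 := by omega
    by_cases hi : (i : ℕ) = 0
    · refine Eq.mpr (congrArg₂ M.frame.lt (dif_pos hi) (dif_neg hj)) ?_
      show M.frame.lt a (f ⟨(j : ℕ) - 1, by omega⟩)
      set m : Fin d := ⟨(j : ℕ) - 1, by omega⟩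
      have haf : M.le a (f m) := M.trans a w (f m) hle (hle0 m)
      refine ⟨haf, fun hafe => ?_⟩
      have : M.le (f m) w := hafe ▸ hle
      exact hne (M.antisymm a w hle (hafe ▸ (hle0 m)) |>.symm ▸ rfl) |>.elim
    · refine Eq.mpr (congrArg₂ M.frame.lt (dif_neg hi) (dif_neg hj)) ?_
      show M.frame.lt (f ⟨(i : ℕ) - 1, by omega⟩) (f ⟨(j : ℕ) - 1, by omega⟩)
      exact hs _ _ (show (i : ℕ) - 1 < (j : ℕ) - 1 by omega)

theorem dep_lt_dep (M : Model n) [Finite M.W] {a b : M.W} (hle : M.le a b)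
    (hne : a ≠ b) : dep M b < dep M a := by
  have hb := (depthEq_dep M b).1
  have hch := chain_prepend M hle hne hb
  by_contra h
  exact (depthEq_dep M a).2 (chain_mono M a (by omega) hch)

theorem exists_dep_pred (M : Model n) [Finite M.W] {w : M.W} {m : ℕ}
    (h : dep M w = m + 1) (hm : 1 ≤ m) : ∃ v : M.W, dep M v = m := by
  have hc : M.frame.hasChainUp w (m + 1) := h ▸ (depthEq_dep M w).1
  obtain ⟨f, h0, hs⟩ := hc
  set v := f ⟨1, by omega⟩ with hv
  have h00 : f ⟨0, by omega⟩ = w := h0 _ rfl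
  have hwv : M.frame.lt w v := by
    rw [← h00]
    exact hs _ _ Nat.zero_lt_one
  have htail : M.frame.hasChainUp v m := by
    refine ⟨fun i => f ⟨(i : ℕ) + 1, by omega⟩, ?_, ?_⟩
    · intro i hi
      rw [hv]
      exact congrArg f (Fin.ext (by simp [hi]))
    · intro i j hij
      exact hs _ _ (by exact Nat.add_lt_add_right hij 1)
  refine ⟨v, ?_⟩
  have hdv := depthEq_dep M v
  by_contra hne
  rcases Nat.lt_or_ge (dep M v) m with hlt | hge
  · exact hdv.2 (chain_mono M v (by omega) htail)
  · have hcv : M.frame.hasChainUp v (m + 1) := chain_mono M v (by omega) hdv.1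
    have hpre := chain_prepend M hwv.1 hwv.2 hcv
    exact (depthEq_dep M w).2 (by rw [h]; exact hpre)

theorem exists_dep_aux (M : Model n) [Finite M.W] :
    ∀ k (w : M.W) (i : ℕ), 1 ≤ i → dep M w = i + k → ∃ v : M.W, dep M v = i := by
  intro k
  induction k with
  | zero => intro w i h1 h2; exact ⟨w, by omega⟩
  | succ k ih =>
    intro w i h1 h2
    obtain ⟨v, hv⟩ := exists_dep_pred M (show dep M w = (i + k) + 1 by omega) (by omega)
    exact ih v i h1 hv

theorem exists_dep (M : Model n) [Finite M.W] (w : M.W) (i : ℕ) (h1 : 1 ≤ i)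
    (h2 : i ≤ dep M w) : ∃ v : M.W, dep M v = i :=
  exists_dep_aux M (dep M w - i) w i h1 (by omega)

theorem le_of_dep_lt (M : Model n) [Finite M.W] (hbs : IsBooleanSum M.frame)
    {a b : M.W} (h : dep M b < dep M a) : M.le a b := by
  have key : ∀ m (a b : M.W), dep M a ≤ m → dep M b < dep M a → M.le a b := by
    intro m
    induction m with
    | zero => intro a b h1 h2; omega
    | succ m ih =>
      intro a b h1 h2
      by_cases heq : dep M a = dep M b + 1
      · have ha := depthEq_dep M a
        rw [heq] at ha
        exact hbs.2.2 a b (dep M b) ha (depthEq_dep M b)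
      · have h3 : 1 ≤ dep M b := one_le_dep M b
        obtain ⟨v, hv⟩ := exists_dep_pred M
          (show dep M a = (dep M a - 1) + 1 by omega) (by omega)
        have hav : M.le a v := by
          have ha := depthEq_dep M a
          rw [show dep M a = dep M v + 1 by omega] at ha
          exact hbs.2.2 a v (dep M v) ha (depthEq_dep M v)
        exact M.trans a v b hav (ih v b (by omega) (by omega))
  exact key (dep M a) a b le_rfl h

/-- Two points in the same layer with the same color are equal. -/
theorem col_inj (M : Model n) [Finite M.W] (hbs : IsBooleanSum M.frame)
    (hg : M.Generated) {a b : M.W} (hd : dep M a = dep M b)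
    (hc : M.col a = M.col b) : a = b := by
  apply hg
  have main : ∀ u v p' : M.W, dep M u = dep M v → M.le u p' →
      (u = a ∧ v = b) ∨ (u = b ∧ v = a) →
      ∃ q', M.le v q' ∧ (p' = q' ∨ (p' = a ∧ q' = b) ∨ (p' = b ∧ q' = a)) := by
    intro u v p' hduv hle hcase
    by_cases hp : p' = u
    · refine ⟨v, M.refl v, ?_⟩
      rcases hcase with ⟨h1, h2⟩ | ⟨h1, h2⟩
      · exact Or.inr (Or.inl ⟨hp.trans h1, h2⟩)
      · exact Or.inr (Or.inr ⟨hp.trans h1, h2⟩)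
    · have hlt : dep M p' < dep M v := hduv ▸ dep_lt_dep M hle (Ne.symm hp)
      exact ⟨p', le_of_dep_lt M hbs hlt, Or.inl rfl⟩
  refine ⟨fun p q => p = q ∨ (p = a ∧ q = b) ∨ (p = b ∧ q = a),
    Or.inr (Or.inl ⟨rfl, rfl⟩), ?_, ?_, ?_⟩
  · rintro p q (h | ⟨h1, h2⟩ | ⟨h1, h2⟩)
    · rw [h]
    · rw [h1, h2]; exact hc
    · rw [h1, h2]; exact hc.symm
  · rintro p q p' (h | ⟨h1, h2⟩ | ⟨h1, h2⟩) hle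
    · exact ⟨p', h ▸ hle, Or.inl rfl⟩
    · exact main p q p' (by rw [h1, h2, hd]) hle (Or.inl ⟨h1, h2⟩)
    · exact main p q p' (by rw [h1, h2, hd.symm]) hle (Or.inr ⟨h1, h2⟩)
  · rintro p q q' (h | ⟨h1, h2⟩ | ⟨h1, h2⟩) hle
    · exact ⟨q', h ▸ hle, Or.inl rfl⟩
    · obtain ⟨x', hx', hs⟩ := main q p q' (by rw [h1, h2, hd.symm]) hle
        (Or.inr ⟨h2, h1⟩)
      refine ⟨x', hx', ?_⟩
      rcases hs with h' | ⟨ha1, ha2⟩ | ⟨ha1, ha2⟩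
      · exact Or.inl h'.symm
      · exact Or.inr (Or.inr ⟨ha2, ha1⟩)
      · exact Or.inr (Or.inl ⟨ha2, ha1⟩)
    · obtain ⟨x', hx', hs⟩ := main q p q' (by rw [h1, h2, hd]) hle
        (Or.inl ⟨h2, h1⟩)
      refine ⟨x', hx', ?_⟩
      rcases hs with h' | ⟨ha1, ha2⟩ | ⟨ha1, ha2⟩
      · exact Or.inl h'.symm
      · exact Or.inr (Or.inr ⟨ha2, ha1⟩)
      · exact Or.inr (Or.inl ⟨ha2, ha1⟩)

/-- No point may sit directly below a same-colored singleton layer. -/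
theorem no_clone_below (M : Model n) [Finite M.W] (hbs : IsBooleanSum M.frame)
    (hg : M.Generated) {z u : M.W} (hd : dep M z = dep M u + 1)
    (hc : M.col z = M.col u) (huniq : ∀ v, dep M v = dep M u → v = u) :
    False := by
  have hzu : z = u := by
    apply hg
    refine ⟨fun p q => p = q ∨ (p = z ∧ q = u), Or.inr ⟨rfl, rfl⟩, ?_, ?_, ?_⟩
    · rintro p q (h | ⟨h1, h2⟩)
      · rw [h]
      · rw [h1, h2]; exact hc
    · rintro p q p' (h | ⟨h1, h2⟩) hle
      · exact ⟨p', h ▸ hle, Or.inl rfl⟩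
      · by_cases hp : p' = p
        · exact ⟨q, M.refl q, Or.inr ⟨hp.trans h1, h2⟩⟩
        · have hlt : dep M p' < dep M z := by
            rw [← h1]; exact dep_lt_dep M hle (Ne.symm hp)
          by_cases hpu : dep M p' = dep M u
          · exact ⟨q, M.refl q, Or.inl ((huniq p' hpu).trans h2.symm)⟩
          · refine ⟨p', ?_, Or.inl rfl⟩
            rw [h2]
            exact le_of_dep_lt M hbs (by omega)
    · rintro p q q' (h | ⟨h1, h2⟩) hle
      · exact ⟨q', h ▸ hle, Or.inl rfl⟩
      · by_cases hq : q' = q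
        · exact ⟨p, M.refl p, Or.inr ⟨h1, hq.trans h2⟩⟩
        · have hlt : dep M q' < dep M u := by
            rw [← h2]; exact dep_lt_dep M hle (Ne.symm hq)
          refine ⟨q', ?_, Or.inl rfl⟩
          rw [h1]
          exact le_of_dep_lt M hbs (by omega)
  rw [hzu] at hd
  omega

theorem squeeze (M : Model n) [Finite M.W] (hbs : IsBooleanSum M.frame)
    {w z v : M.W} (h1 : dep M w < dep M v) (h2 : dep M v < dep M z)
    (hc : M.col w = M.col z) : M.col v = M.col w := by
  have hzv : M.le z v := le_of_dep_lt M hbs h2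
  have hvw : M.le v w := le_of_dep_lt M hbs h1
  refine Set.Subset.antisymm (M.mono v w hvw) ?_
  rw [hc]
  exact M.mono z v hzv

/-- Color repetition lemma: same color at two depths forces adjacent layers
with the lower one of size `≥ 2`. -/
theorem rep_lemma (M : Model n) [Finite M.W] (hbs : IsBooleanSum M.frame)
    (hg : M.Generated) {w z : M.W} (hlt : dep M w < dep M z)
    (hc : M.col w = M.col z) :
    dep M z = dep M w + 1 ∧ ∃ w', dep M w' = dep M w ∧ M.col w' ≠ M.col w := by
  have h1 : dep M z = dep M w + 1 := by
    by_contra hne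
    have hw1 : 1 ≤ dep M w := one_le_dep M w
    have h2 : dep M w + 2 ≤ dep M z := by omega
    obtain ⟨v, hv⟩ := exists_dep M z (dep M z - 1) (by omega) (by omega)
    have hcv : M.col v = M.col w := squeeze M hbs (by omega) (by omega) hc
    refine no_clone_below M hbs hg (z := z) (u := v) (by omega)
      (by rw [hcv, hc]) ?_
    intro v' hv'
    have hcv' : M.col v' = M.col w := squeeze M hbs (by omega) (by omega) hc
    exact col_inj M hbs hg (by omega) (by rw [hcv', hcv])
  refine ⟨h1, ?_⟩
  by_contra hcon
  push_neg at hcon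
  refine no_clone_below M hbs hg (z := z) (u := w) h1 hc.symm ?_
  intro v hv
  exact col_inj M hbs hg (by omega) (hcon v hv)

theorem stack2 (M : Model n) [Finite M.W] (hs : ¬ HasStack M.frame 2) {i : ℕ}
    {a1 a2 b1 b2 : M.W} (ha : a1 ≠ a2) (ha1 : dep M a1 = i) (ha2 : dep M a2 = i)
    (hb : b1 ≠ b2) (hb1 : dep M b1 = i + 1) (hb2 : dep M b2 = i + 1) : False := by
  apply hs
  refine ⟨i, fun i' h1 h2 => ?_⟩
  have : i' = i ∨ i' = i + 1 := by omega
  rcases this with rfl | rfl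
  · exact ⟨a1, a2, ha, ha1 ▸ depthEq_dep M a1, ha2 ▸ depthEq_dep M a2⟩
  · exact ⟨b1, b2, hb, hb1 ▸ depthEq_dep M b1, hb2 ▸ depthEq_dep M b2⟩

/-! ### Matching data extracted from 2-bisimilarity -/

def Matched (M N : Model n) (a : M.W) (b : N.W) : Prop :=
  M.col a = N.col b ∧
  (∀ a', M.le a a' → ∃ b', N.le b b' ∧ M.col a' = N.col b') ∧
  (∀ b', N.le b b' → ∃ a', M.le a a' ∧ M.col a' = N.col b')

theorem matched_symm {M N : Model n} {a : M.W} {b : N.W} (h : Matched M N a b) :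
    Matched N M b a := by
  refine ⟨h.1.symm, ?_, ?_⟩
  · intro b' hle
    obtain ⟨a', ha', hc⟩ := h.2.2 b' hle
    exact ⟨a', ha', hc.symm⟩
  · intro a' hle
    obtain ⟨b', hb', hc⟩ := h.2.1 a' hle
    exact ⟨b', hb', hc.symm⟩

theorem nbisim_matched {M N : Model n} (h : M.NBisim N 2) :
    (∀ a : M.W, ∃ b : N.W, Matched M N a b) ∧
    (∀ b : N.W, ∃ a : M.W, Matched M N a b) := by
  obtain ⟨S, hmono, hroot, hcol, hforth, hback⟩ := h
  have hm : ∀ a b, S 1 a b → Matched M N a b := by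
    intro a b h1
    refine ⟨hcol a b (hmono 0 a b h1), ?_, ?_⟩
    · intro a' hle
      obtain ⟨b', hb', h0⟩ := hforth 0 a b a' (by omega) h1 hle
      exact ⟨b', hb', hcol _ _ h0⟩
    · intro b' hle
      obtain ⟨a', ha', h0⟩ := hback 0 a b b' (by omega) h1 hle
      exact ⟨a', ha', hcol _ _ h0⟩
  constructor
  · intro a
    obtain ⟨b, hb, h1⟩ := hforth 1 M.root N.root a (by omega) hroot (M.rooted a)
    exact ⟨b, hm a b h1⟩
  · intro b
    obtain ⟨a, ha, h1⟩ := hback 1 M.root N.root b (by omega) hroot (N.rooted b)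
    exact ⟨a, hm a b h1⟩

theorem matched_upcol_mp {M N : Model n} [Finite M.W] [Finite N.W]
    (hMbs : IsBooleanSum M.frame) {a : M.W} {b : N.W}
    (h : Matched M N a b) (g : Set (Fin n))
    (hl : M.col a = g ∨ ∃ v, dep M v < dep M a ∧ M.col v = g) :
    N.col b = g ∨ ∃ v, dep N v < dep N b ∧ N.col v = g := by
  rcases hl with rfl | ⟨v, hv, rfl⟩
  · exact Or.inl h.1.symm
  · obtain ⟨b', hb', hcb⟩ := h.2.1 v (le_of_dep_lt M hMbs hv)
    by_cases hbb : b' = b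
    · exact Or.inl (hbb ▸ hcb).symm
    · exact Or.inr ⟨b', dep_lt_dep N hb' (fun he => hbb he.symm), hcb.symm⟩

theorem matched_upcol {M N : Model n} [Finite M.W] [Finite N.W]
    (hMbs : IsBooleanSum M.frame) (hNbs : IsBooleanSum N.frame)
    {a : M.W} {b : N.W} (h : Matched M N a b) (g : Set (Fin n)) :
    (M.col a = g ∨ ∃ v, dep M v < dep M a ∧ M.col v = g) ↔
    (N.col b = g ∨ ∃ v, dep N v < dep N b ∧ N.col v = g) :=
  ⟨matched_upcol_mp hMbs h g, matched_upcol_mp hNbs (matched_symm h) g⟩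

/-- `c` is realized at depth `j`. -/
def Real (M : Model n) [Finite M.W] (j : ℕ) (c : Set (Fin n)) : Prop :=
  ∃ w : M.W, dep M w = j ∧ M.col w = c

theorem dep_le_root (M : Model n) [Finite M.W] (w : M.W) :
    dep M w ≤ dep M M.root := by
  by_cases h : w = M.root
  · rw [h]
  · exact le_of_lt (dep_lt_dep M (M.rooted w) (fun he => h he.symm))

theorem eq_root_of_dep (M : Model n) [Finite M.W] {w : M.W}
    (h : dep M w = dep M M.root) : w = M.root := by
  by_contra hne
  have := dep_lt_dep M (M.rooted w) (fun he => hne he.symm)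
  omega

/-- The key inductive step: colors realized at layer `j` agree. -/
theorem stepDir (M N : Model n) [Finite M.W] [Finite N.W]
    (hMbs : IsBooleanSum M.frame) (hNbs : IsBooleanSum N.frame)
    (hMs : ¬ HasStack M.frame 2) (hNs : ¬ HasStack N.frame 2)
    (hMg : M.Generated) (hNg : N.Generated)
    (hmatch : ∀ a : M.W, ∃ b : N.W, Matched M N a b)
    (hmatch' : ∀ b : N.W, ∃ a : M.W, Matched M N a b)
    (j : ℕ) (IH : ∀ i, i < j → ∀ c, Real M i c ↔ Real N i c)
    (c : Set (Fin n)) (hc : Real M j c) : Real N j c := by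
  obtain ⟨a, ha, hac⟩ := hc
  obtain ⟨b, hab⟩ := hmatch a
  have hj1 : 1 ≤ j := ha ▸ one_le_dep M a
  have hcb : N.col b = c := by rw [← hab.1, hac]
  have E : ∀ g : Set (Fin n), (c = g ∨ ∃ v, dep M v < j ∧ M.col v = g) ↔
      (c = g ∨ ∃ v, dep N v < dep N b ∧ N.col v = g) := by
    intro g
    have h1 := matched_upcol hMbs hNbs hab g
    rw [hac, hcb, ha] at h1
    exact h1
  rcases lt_trichotomy (dep N b) j with hlt | heq | hgt
  · -- matched point is shallower: contradiction
    exfalso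
    obtain ⟨w, hw, hwc⟩ := (IH (dep N b) hlt c).mpr ⟨b, rfl, hcb⟩
    obtain ⟨hj2, w₂, hw₂, hw₂c⟩ :=
      rep_lemma M hMbs hMg (w := w) (z := a) (by omega) (by rw [hwc, hac])
    have hEg := (E (M.col w₂)).mp (Or.inr ⟨w₂, by omega, rfl⟩)
    rcases hEg with hgc | ⟨v, hvlt, hvc⟩
    · exact hw₂c (by rw [hwc, ← hgc])
    · obtain ⟨v', hv', hv'c⟩ :=
        (IH (dep N v) (by omega) (M.col w₂)).mpr ⟨v, rfl, hvc⟩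
      obtain ⟨hj3, w₃, hw₃, hw₃c⟩ :=
        rep_lemma M hMbs hMg (w := v') (z := w₂) (by omega) hv'c
      refine stack2 M hMs (i := dep M v') (a1 := w₃) (a2 := v')
        (fun he => hw₃c (by rw [he])) hw₃ rfl
        (b1 := w₂) (b2 := w)
        (fun he => hw₂c (by rw [he, hwc])) (by omega) (by omega)
  · exact ⟨b, heq, hcb⟩
  · -- matched point is deeper
    obtain ⟨b₂, hb₂⟩ := exists_dep N b j hj1 (le_of_lt hgt)
    by_cases hgc : c = N.col b₂
    · exact ⟨b₂, hb₂, hgc.symm⟩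
    have hE2 := (E (N.col b₂)).mpr (Or.inr ⟨b₂, by omega, rfl⟩)
    rcases hE2 with h' | ⟨v, hvlt, hvc⟩
    · exact absurd h' hgc
    -- v : M, dep v < j, col v = col b₂
    obtain ⟨u, hu, huc⟩ := (IH (dep M v) (by omega) (N.col b₂)).mp ⟨v, rfl, hvc⟩
    obtain ⟨hju, u₂, hu₂, hu₂c⟩ :=
      rep_lemma N hNbs hNg (w := u) (z := b₂) (by omega) huc
    -- u, u₂ : N at depth j - 1 with different colors
    obtain ⟨m₁, hm₁, hm₁c⟩ :=
      (IH (dep N u) (by omega) (N.col b₂)).mpr ⟨u, rfl, huc⟩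
    obtain ⟨m₂, hm₂, hm₂c⟩ :=
      (IH (dep N u) (by omega) (N.col u₂)).mpr ⟨u₂, hu₂, rfl⟩
    have hm12 : m₁ ≠ m₂ := by
      intro he
      exact hu₂c (by rw [← hm₂c, ← he, hm₁c, huc])
    have hMall : ∀ p : M.W, dep M p = j → M.col p = c := by
      intro p hp
      by_contra hpc
      refine stack2 M hMs (i := dep N u) (a1 := m₁) (a2 := m₂) hm12 hm₁ hm₂
        (b1 := a) (b2 := p) (fun he => hpc (by rw [← he, hac]))
        (by omega) (by omega)
    -- match b₂ back into M
    obtain ⟨a₂, ha₂⟩ := hmatch' b₂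
    have ha₂c : M.col a₂ = N.col b₂ := ha₂.1
    have E₂ : ∀ g : Set (Fin n),
        (N.col b₂ = g ∨ ∃ w, dep M w < dep M a₂ ∧ M.col w = g) ↔
        (N.col b₂ = g ∨ ∃ w, dep N w < j ∧ N.col w = g) := by
      intro g
      have h1 := matched_upcol hMbs hNbs ha₂ g
      rw [ha₂c, hb₂] at h1
      exact h1
    rcases lt_trichotomy (dep M a₂) j with hilt | hieq | higt
    · -- a₂ shallower than j
      exfalso
      rcases Nat.lt_or_ge (dep M a₂) (dep N u) with hi1 | hi1
      · obtain ⟨hj3, w₃, hw₃, hw₃c⟩ := rep_lemma M hMbs hMg (w := a₂) (z := m₁)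
          (by omega) (by rw [ha₂c, hm₁c])
        refine stack2 M hMs (i := dep M a₂) (a1 := w₃) (a2 := a₂)
          (fun he => hw₃c (by rw [he])) hw₃ rfl
          (b1 := m₁) (b2 := m₂) hm12 (by omega) (by omega)
      · have hieq1 : dep M a₂ = dep N u := by omega
        have hE2b := (E₂ (N.col u₂)).mpr (Or.inr ⟨u₂, by omega, rfl⟩)
        rcases hE2b with hgu | ⟨v₂, hv₂, hv₂c⟩
        · exact hu₂c (by rw [← hgu, huc])
        · obtain ⟨hj4, w₄, hw₄, hw₄c⟩ := rep_lemma M hMbs hMg (w := v₂)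
            (z := m₂) (by omega) (by rw [hv₂c, hm₂c])
          refine stack2 M hMs (i := dep M v₂) (a1 := w₄) (a2 := v₂)
            (fun he => hw₄c (by rw [he])) hw₄ rfl
            (b1 := m₁) (b2 := m₂) hm12 (by omega) (by omega)
    · exact absurd ((hMall a₂ hieq).symm.trans ha₂c) hgc
    · -- a₂ deeper than j
      exfalso
      have hE2c := (E₂ c).mp (Or.inr ⟨a, by omega, hac⟩)
      rcases hE2c with hgceq | ⟨v₃, hv₃, hv₃c⟩
      · exact hgc hgceq.symm
      · obtain ⟨h5, -⟩ := rep_lemma N hNbs hNg (w := v₃) (z := b)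
          (by omega) (by rw [hv₃c, hcb])
        omega

theorem mainIff (M N : Model n) [Finite M.W] [Finite N.W]
    (hMbs : IsBooleanSum M.frame) (hNbs : IsBooleanSum N.frame)
    (hMs : ¬ HasStack M.frame 2) (hNs : ¬ HasStack N.frame 2)
    (hMg : M.Generated) (hNg : N.Generated)
    (h : M.NBisim N 2) : ∀ (j : ℕ) (c : Set (Fin n)), Real M j c ↔ Real N j c := by
  obtain ⟨hf, hb⟩ := nbisim_matched h
  have hb' : ∀ b : N.W, ∃ a : M.W, Matched N M b a :=
    fun b => (hb b).imp (fun a ha => matched_symm ha)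
  have hf' : ∀ a : M.W, ∃ b : N.W, Matched N M b a :=
    fun a => (hf a).imp (fun b hb => matched_symm hb)
  intro j
  induction j using Nat.strong_induction_on with
  | _ j IH =>
    intro c
    constructor
    · exact stepDir M N hMbs hNbs hMs hNs hMg hNg hf hb j IH c
    · exact stepDir N M hNbs hMbs hNs hMs hNg hMg hb' hf' j
        (fun i hi c => (IH i hi c).symm) c

end S8aux
/-- Let `P`, `Q` be finite Boolean sums of stack-depth at most
`1`, and `(P, x)`, `(Q, y)` `n`-generated models over the same `n` variables
based on them. If they are `2`-bisimilar, then they are isomorphic. -/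
theorem statement8 (n : ℕ) (M N : Model n)
    (hMfin : Finite M.W) (hNfin : Finite N.W)
    (hMbs : IsBooleanSum M.frame) (hNbs : IsBooleanSum N.frame)
    (hMs : ¬ HasStack M.frame 2) (hNs : ¬ HasStack N.frame 2)
    (hMg : M.Generated) (hNg : N.Generated)
    (h : M.NBisim N 2) : M.Iso N := by
  letI : Finite M.W := hMfin
  letI : Finite N.W := hNfin
  have main := S8aux.mainIff M N hMbs hNbs hMs hNs hMg hNg h
  have hex : ∀ a : M.W, ∃ b : N.W, S8aux.dep N b = S8aux.dep M a ∧ N.col b = M.col a :=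
    fun a => (main (S8aux.dep M a) (M.col a)).mp ⟨a, rfl, rfl⟩
  choose f hf1 hf2 using hex
  have hinj : Function.Injective f := by
    intro a b hfe
    apply S8aux.col_inj M hMbs hMg
    · rw [← hf1 a, ← hf1 b, hfe]
    · rw [← hf2 a, ← hf2 b, hfe]
  have hsurj : Function.Surjective f := by
    intro b
    obtain ⟨a, ha1, ha2⟩ := (main (S8aux.dep N b) (N.col b)).mpr ⟨b, rfl, rfl⟩
    refine ⟨a, S8aux.col_inj N hNbs hNg ?_ ?_⟩
    · rw [hf1 a, ha1]
    · rw [hf2 a, ha2]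
  refine ⟨f, ⟨hinj, hsurj⟩, ?_, ?_, fun a => hf2 a⟩
  · obtain ⟨u, hu1, hu2⟩ :=
      (main (S8aux.dep M M.root) (M.col M.root)).mp ⟨M.root, rfl, rfl⟩
    obtain ⟨w, hw1, hw2⟩ :=
      (main (S8aux.dep N N.root) (N.col N.root)).mpr ⟨N.root, rfl, rfl⟩
    have h1 : S8aux.dep M M.root ≤ S8aux.dep N N.root := by
      have := S8aux.dep_le_root N u
      omega
    have h2 : S8aux.dep N N.root ≤ S8aux.dep M M.root := by
      have := S8aux.dep_le_root M w
      omega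
    apply S8aux.eq_root_of_dep N
    rw [hf1]
    omega
  · intro a b
    constructor
    · intro hle
      by_cases hab : a = b
      · rw [hab]; exact N.refl _
      · exact S8aux.le_of_dep_lt N hNbs
          (by rw [hf1 a, hf1 b]; exact S8aux.dep_lt_dep M hle hab)
    · intro hle
      by_cases hab : f a = f b
      · rw [hinj hab]; exact M.refl _
      · exact S8aux.le_of_dep_lt M hMbs
          (by rw [← hf1 a, ← hf1 b]; exact S8aux.dep_lt_dep N hle hab)
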